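/- Let n ≥ 1 and let D = {k/n : k = 0, 1, …, n} ⊆ [0,1]. Then the maximum over (u,v) ∈ D × D of min(u,v) − uv and the maximum over (u,v) ∈ D × D of uv − max(u+v−1, 0) are both equal to 1/4 if n is even, and both equal to (n² − 1)/(4n²) if n is odd. Equivalently, for subcopulas with domain D × D one has −d(W_{S_n}) = d(M_{S_n}) = 1/4 for n even and (n²−1)/(4n²) for n odd. -/

import Mathlib

/-- A bivariate subcopula: `S : D₁ × D₂ → [0,1]` where `D₁, D₂ ⊆ [0,1]` each
contain `0` and `1`, with grounded/marginal boundary conditions and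
2-increasingness. -/
def IsSubcopula (D₁ D₂ : Set ℝ) (S : ℝ → ℝ → ℝ) : Prop :=
  D₁ ⊆ Set.Icc 0 1 ∧ D₂ ⊆ Set.Icc 0 1 ∧
  (0 : ℝ) ∈ D₁ ∧ (1 : ℝ) ∈ D₁ ∧ (0 : ℝ) ∈ D₂ ∧ (1 : ℝ) ∈ D₂ ∧
  (∀ u ∈ D₁, ∀ v ∈ D₂, S u v ∈ Set.Icc (0 : ℝ) 1) ∧
  (∀ u ∈ D₁, S u 0 = 0) ∧ (∀ v ∈ D₂, S 0 v = 0) ∧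
  (∀ u ∈ D₁, S u 1 = u) ∧ (∀ v ∈ D₂, S 1 v = v) ∧
  (∀ u₁ ∈ D₁, ∀ u₂ ∈ D₁, ∀ v₁ ∈ D₂, ∀ v₂ ∈ D₂, u₁ ≤ u₂ → v₁ ≤ v₂ →
    0 ≤ S u₂ v₂ - S u₂ v₁ - S u₁ v₂ + S u₁ v₁)

/-- `d(S) = sup{S(u,v) − uv} − sup{uv − S(u,v)}`, suprema over `D₁ × D₂`. -/
noncomputable def dval (D₁ D₂ : Set ℝ) (S : ℝ → ℝ → ℝ) : ℝ :=
  sSup {x : ℝ | ∃ u ∈ D₁, ∃ v ∈ D₂, x = S u v - u * v} -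
  sSup {x : ℝ | ∃ u ∈ D₁, ∃ v ∈ D₂, x = u * v - S u v}

private lemma int_sq_ge_one' {x : ℤ} (h : x ≠ 0) : 1 ≤ x^2 := by
  rcases lt_or_gt_of_ne h with h'|h' <;> nlinarith

/-- Key integer inequality for the odd case: if `a + b ≤ 2m+1` with `a, b ≥ 0`,
then `4ab ≤ (2m+1)² − 1`. -/
private lemma odd_key' (m a b : ℤ) (ha : 0 ≤ a) (hb : 0 ≤ b)
    (hab : a + b ≤ 2*m+1) : 4*(a*b) ≤ (2*m+1)^2 - 1 := by
  rcases eq_or_lt_of_le hab with h | h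
  · have h1 : a - b ≠ 0 := by omega
    have h2 := int_sq_ge_one' h1
    have h3 : (a+b)^2 = (2*m+1)^2 := by rw [h]
    nlinarith
  · have h4 : a + b ≤ 2*m := by omega
    have hm0 : 0 ≤ m := by omega
    nlinarith [sq_nonneg (a-b)]

/-- Upper bound for `min u v − uv` on the grid when `n = 2m+1` is odd. -/
private lemma odd_M' (n j k m : ℕ) (hm : n = 2*m+1) (hj : j ≤ n) (hk : k ≤ n) :
    min ((j:ℝ)/n) ((k:ℝ)/n) - (j:ℝ)/n * ((k:ℝ)/n) ≤ ((n:ℝ)^2-1)/(4*(n:ℝ)^2) := by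
  have hn0 : (0:ℝ) < n := by
    have : 0 < n := by omega
    exact_mod_cast this
  have h4 : (0:ℝ) < 4*(n:ℝ)^2 := by nlinarith
  rcases le_total j k with hjk | hjk
  · have key : (4*((j:ℤ)*((n:ℤ)-k)) : ℤ) ≤ (2*(m:ℤ)+1)^2 - 1 :=
      odd_key' m j ((n:ℤ)-k) (by positivity) (by omega) (by omega)
    have keyR : 4*((j:ℝ)*((n:ℝ)-k)) ≤ (n:ℝ)^2 - 1 := by
      have h' : ((4*((j:ℤ)*((n:ℤ)-k)):ℤ):ℝ) ≤ (((2*(m:ℤ)+1)^2-1 : ℤ):ℝ) := by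
        exact_mod_cast key
      push_cast at h'
      have hnR : (n:ℝ) = 2*(m:ℝ)+1 := by push_cast [hm]; ring
      rw [hnR]; nlinarith [h']
    rw [min_eq_left (by apply div_le_div_of_nonneg_right; exact_mod_cast hjk; exact hn0.le)]
    have e1 : (j:ℝ)/n - (j:ℝ)/n * ((k:ℝ)/n) = (4*((j:ℝ)*((n:ℝ)-k)))/(4*(n:ℝ)^2) := by
      field_simp
    rw [e1, div_le_div_iff₀ h4 h4]
    nlinarith [keyR]
  · have key : (4*((k:ℤ)*((n:ℤ)-j)) : ℤ) ≤ (2*(m:ℤ)+1)^2 - 1 :=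
      odd_key' m k ((n:ℤ)-j) (by positivity) (by omega) (by omega)
    have keyR : 4*((k:ℝ)*((n:ℝ)-j)) ≤ (n:ℝ)^2 - 1 := by
      have h' : ((4*((k:ℤ)*((n:ℤ)-j)):ℤ):ℝ) ≤ (((2*(m:ℤ)+1)^2-1 : ℤ):ℝ) := by
        exact_mod_cast key
      push_cast at h'
      have hnR : (n:ℝ) = 2*(m:ℝ)+1 := by push_cast [hm]; ring
      rw [hnR]; nlinarith [h']
    rw [min_eq_right (by apply div_le_div_of_nonneg_right; exact_mod_cast hjk; exact hn0.le)]
    have e1 : (k:ℝ)/n - (j:ℝ)/n * ((k:ℝ)/n) = (4*((k:ℝ)*((n:ℝ)-j)))/(4*(n:ℝ)^2) := by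
      field_simp
    rw [e1, div_le_div_iff₀ h4 h4]
    nlinarith [keyR]

/-- Upper bound for `uv − max(u+v−1,0)` on the grid when `n = 2m+1` is odd. -/
private lemma odd_W' (n j k m : ℕ) (hm : n = 2*m+1) (hj : j ≤ n) (hk : k ≤ n) :
    (j:ℝ)/n * ((k:ℝ)/n) - max ((j:ℝ)/n + (k:ℝ)/n - 1) 0 ≤ ((n:ℝ)^2-1)/(4*(n:ℝ)^2) := by
  have hn0 : (0:ℝ) < n := by
    have : 0 < n := by omega
    exact_mod_cast this
  have h4 : (0:ℝ) < 4*(n:ℝ)^2 := by nlinarith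
  have hnR : (n:ℝ) = 2*(m:ℝ)+1 := by push_cast [hm]; ring
  rcases le_total ((j:ℝ)/n + (k:ℝ)/n) 1 with h | h
  · have hjk : j + k ≤ n := by
      rw [← add_div] at h
      have h1 := (div_le_one hn0).1 h
      exact_mod_cast h1
    have key := odd_key' m j k (by positivity) (by positivity) (by omega)
    have h' : ((4*((j:ℤ)*(k:ℤ)):ℤ):ℝ) ≤ (((2*(m:ℤ)+1)^2-1 : ℤ):ℝ) := by exact_mod_cast key
    push_cast at h'
    have keyR : 4*((j:ℝ)*(k:ℝ)) ≤ (n:ℝ)^2 - 1 := by rw [hnR]; nlinarith [h']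
    rw [max_eq_right (by linarith)]
    have e1 : (j:ℝ)/n * ((k:ℝ)/n) - 0 = (4*((j:ℝ)*(k:ℝ)))/(4*(n:ℝ)^2) := by field_simp; ring
    rw [e1, div_le_div_iff₀ h4 h4]
    nlinarith [keyR]
  · have hjk : n ≤ j + k := by
      rw [← add_div] at h
      have h1 := (one_le_div hn0).1 h
      exact_mod_cast h1
    have key := odd_key' m ((n:ℤ)-j) ((n:ℤ)-k) (by omega) (by omega) (by omega)
    have h' : ((4*(((n:ℤ)-j)*((n:ℤ)-k)):ℤ):ℝ) ≤ (((2*(m:ℤ)+1)^2-1 : ℤ):ℝ) := by exact_mod_cast key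
    push_cast at h'
    have keyR : 4*(((n:ℝ)-j)*((n:ℝ)-k)) ≤ (n:ℝ)^2 - 1 := by rw [hnR]; nlinarith [h']
    rw [max_eq_left (by linarith)]
    have e1 : (j:ℝ)/n * ((k:ℝ)/n) - ((j:ℝ)/n + (k:ℝ)/n - 1) = (4*(((n:ℝ)-j)*((n:ℝ)-k)))/(4*(n:ℝ)^2) := by
      field_simp; ring
    rw [e1, div_le_div_iff₀ h4 h4]
    nlinarith [keyR]

/-- On the empirical-subcopula grid `D = {k/n : k = 0, …, n}`, the suprema
`d(M_{Sₙ}) = sup{min(u,v) − uv}` and `−d(W_{Sₙ}) = sup{uv − max(u+v−1,0)}` are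
both `1/4` for even `n` and `(n² − 1)/(4n²)` for odd `n`. -/
theorem dval_M_W_grid (n : ℕ) (hn : 1 ≤ n)
    (D : Set ℝ) (hD : D = {x : ℝ | ∃ k : ℕ, k ≤ n ∧ x = (k : ℝ) / n}) :
    (Even n →
      sSup {x : ℝ | ∃ u ∈ D, ∃ v ∈ D, x = min u v - u * v} = 1/4 ∧
      sSup {x : ℝ | ∃ u ∈ D, ∃ v ∈ D, x = u * v - max (u + v - 1) 0} = 1/4) ∧
    (Odd n →
      sSup {x : ℝ | ∃ u ∈ D, ∃ v ∈ D, x = min u v - u * v} =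
        ((n : ℝ)^2 - 1) / (4 * (n : ℝ)^2) ∧
      sSup {x : ℝ | ∃ u ∈ D, ∃ v ∈ D, x = u * v - max (u + v - 1) 0} =
        ((n : ℝ)^2 - 1) / (4 * (n : ℝ)^2)) := by
  subst hD
  have hn0 : (0:ℝ) < n := by exact_mod_cast Nat.pos_of_ne_zero (by omega)
  have hbd : ∀ j : ℕ, j ≤ n → (0:ℝ) ≤ (j:ℝ)/n ∧ (j:ℝ)/n ≤ 1 := by
    intro j hj
    refine ⟨by positivity, (div_le_one hn0).2 (by exact_mod_cast hj)⟩
  constructor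
  · rintro ⟨m, hm⟩
    have hm1 : 1 ≤ m := by omega
    have h12 : (m:ℝ)/n = 1/2 := by
      have hmR : (0:ℝ) < (m:ℝ) := by exact_mod_cast hm1
      rw [div_eq_iff (by linarith : (n:ℝ) ≠ 0)]
      have : (n:ℝ) = (m:ℝ) + m := by push_cast [hm]; ring
      rw [this]; ring
    constructor
    · apply IsGreatest.csSup_eq
      constructor
      · exact ⟨(m:ℝ)/n, ⟨m, by omega, rfl⟩, (m:ℝ)/n, ⟨m, by omega, rfl⟩,
          by rw [h12]; norm_num⟩
      · rintro x ⟨u, ⟨j, hj, rfl⟩, v, ⟨k, hk, rfl⟩, rfl⟩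
        obtain ⟨h1, h2⟩ := hbd j hj
        obtain ⟨h3, h4⟩ := hbd k hk
        rcases le_total ((j:ℝ)/n) ((k:ℝ)/n) with h | h
        · rw [min_eq_left h]
          nlinarith [mul_nonneg h1 (sub_nonneg.2 h), sq_nonneg (2*((j:ℝ)/n)-1)]
        · rw [min_eq_right h]
          nlinarith [mul_nonneg h3 (sub_nonneg.2 h), sq_nonneg (2*((k:ℝ)/n)-1)]
    · apply IsGreatest.csSup_eq
      constructor
      · exact ⟨(m:ℝ)/n, ⟨m, by omega, rfl⟩, (m:ℝ)/n, ⟨m, by omega, rfl⟩,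
          by rw [h12]; norm_num⟩
      · rintro x ⟨u, ⟨j, hj, rfl⟩, v, ⟨k, hk, rfl⟩, rfl⟩
        obtain ⟨h1, h2⟩ := hbd j hj
        obtain ⟨h3, h4⟩ := hbd k hk
        set u := (j:ℝ)/n
        set v := (k:ℝ)/n
        rcases le_total (u+v) 1 with h | h
        · rw [max_eq_right (by linarith)]
          nlinarith [sq_nonneg (u-v), mul_nonneg (by linarith : (0:ℝ) ≤ 1-(u+v)) (by linarith : (0:ℝ) ≤ 1+(u+v))]
        · rw [max_eq_left (by linarith)]
          nlinarith [sq_nonneg (u-v), mul_nonneg (by linarith : (0:ℝ) ≤ u+v-1) (by linarith : (0:ℝ) ≤ 3-(u+v))]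
  · rintro ⟨m, hm⟩
    have hnR : (n:ℝ) = 2*(m:ℝ)+1 := by push_cast [hm]; ring
    have hne : (2*(m:ℝ)+1) ≠ 0 := by positivity
    constructor
    · apply IsGreatest.csSup_eq
      constructor
      · refine ⟨(m:ℝ)/n, ⟨m, by omega, rfl⟩, (m:ℝ)/n, ⟨m, by omega, rfl⟩, ?_⟩
        rw [min_self, hnR]
        field_simp
        ring
      · rintro x ⟨u, ⟨j, hj, rfl⟩, v, ⟨k, hk, rfl⟩, rfl⟩
        exact odd_M' n j k m hm hj hk
    · apply IsGreatest.csSup_eq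
      constructor
      · refine ⟨(m:ℝ)/n, ⟨m, by omega, rfl⟩, ((m+1:ℕ):ℝ)/n, ⟨m+1, by omega, rfl⟩, ?_⟩
        push_cast
        rw [hnR]
        have h0 : (m:ℝ)/(2*(m:ℝ)+1) + ((m:ℝ)+1)/(2*(m:ℝ)+1) - 1 = 0 := by
          field_simp
          ring
        rw [h0, max_self]
        field_simp
        ring
      · rintro x ⟨u, ⟨j, hj, rfl⟩, v, ⟨k, hk, rfl⟩, rfl⟩
        exact odd_W' n j k m hm hj hk
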